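/- Let (A, C, ψ)_R be a bijective right entwining structure with entwined extension B ⊆ A given by a grouplike element e ∈ C, and T ⊆ B a subalgebra. Suppose σ : A → B ⊗_T A is a left B-linear right C-colinear section of the multiplication map, B is flat as a right T-module, and f : A → B is a left T-linear retraction of the inclusion B ⊆ A. Then φ = μ_B ∘ (B ⊗_T f) ∘ σ : A → B is a left B-linear retraction of the inclusion B ⊆ A; hence B is a direct summand of A as a left B-module. -/

import Mathlib

/-!
STATEMENT 19: In the setting of a bijective right entwining structure with
entwined extension `B ⊆ A` given by a grouplike element `e ∈ C` and a
subalgebra `T ⊆ B`, suppose `σ : A → B ⊗_T A` is a left `B`-linear right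
`C`-colinear section of the multiplication map, `B` is flat as a right
`T`-module, and `f : A → B` is a left `T`-linear retraction of the inclusion
`B ⊆ A`.  Then `φ = μ_B ∘ (B ⊗_T f) ∘ σ : A → B` is a left `B`-linear
retraction of the inclusion `B ⊆ A`; hence `B` is a direct summand of `A` as a
left `B`-module.

Tensor products are axiomatised as in Statement 18; `Φ` denotes the canonical
map `μ_B ∘ (B ⊗_T f) : B ⊗_T A → A` (with image in `B`), so `φ = Φ ∘ σ`.
-/

open MulOpposite

theorem section_gives_B_linear_retraction
    {k R : Type*} [CommRing k] [Ring R] [Algebra k R]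
    {A : Type*} [Ring A] [Algebra k A] (ηA : R →ₐ[k] A)
    {C : Type*} [AddCommGroup C] [Module k C] [Module R C] [Module Rᵐᵒᵖ C]
    [IsScalarTower k R C] [IsScalarTower k Rᵐᵒᵖ C] [SMulCommClass R Rᵐᵒᵖ C]
    {CC : Type*} [AddCommGroup CC] [Module k CC]
    (tm : C →ₗ[k] C →ₗ[k] CC)
    (htm_bal : ∀ (r : R) (c c' : C), tm (op r • c) c' = tm c (r • c'))
    (Δ : C →ₗ[k] CC) (ε : C →ₗ[k] R)
    {AC : Type*} [AddCommGroup AC] [Module k AC] [Module A AC]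
    (tmAC : A →ₗ[k] C →ₗ[k] AC)
    (htmAC_bal : ∀ (a : A) (r : R) (c : C), tmAC (a * ηA r) c = tmAC a (r • c))
    (htmAC_left : ∀ (a a' : A) (c : C), a • tmAC a' c = tmAC (a * a') c)
    (ψ : C →ₗ[k] A →ₗ[k] AC)
    (hψ_bal : ∀ (r : R) (c : C) (a : A), ψ (op r • c) a = ψ c (ηA r * a))
    (hent2 : ∀ c : C, ψ c 1 = tmAC 1 c)
    -- the grouplike element giving the coaction ρ(a) = ψ(e ⊗ a)
    (e : C) (he1 : Δ e = tm e e) (he2 : ε e = 1)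
    -- B is the coinvariant subalgebra and T ⊆ B
    (B : Subalgebra k A)
    (hB : ∀ x : A, x ∈ B ↔ ψ e x = tmAC x e)
    (T : Subalgebra k A) (hTB : T ≤ B)
    -- BA = B ⊗_T A
    {BA : Type*} [AddCommGroup BA] [Module k BA] [Module B BA]
    (tmBA : B →ₗ[k] A →ₗ[k] BA)
    (htmBA_bal : ∀ (b : B) (t : T) (a : A),
      tmBA (b * ⟨(t : A), hTB t.2⟩) a = tmBA b ((t : A) * a))
    (htmBA_left : ∀ (b b' : B) (a : A), b • tmBA b' a = tmBA (b * b') a)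
    (hspanBA : ∀ x : BA,
      x ∈ Submodule.span k {y : BA | ∃ (b : B) (a : A), y = tmBA b a})
    -- the coaction B ⊗ ρ on B ⊗_T A, in BAC = B ⊗_T A ⊗_R C
    {BAC : Type*} [AddCommGroup BAC] [Module k BAC]
    (t3 : B →ₗ[k] A →ₗ[k] C →ₗ[k] BAC)
    (comb : B →ₗ[k] AC →ₗ[k] BAC)
    (hcomb : ∀ (b : B) (a : A) (c : C), comb b (tmAC a c) = t3 b a c)
    (ext : BA →ₗ[k] C →ₗ[k] BAC)
    (hext : ∀ (b : B) (a : A) (c : C), ext (tmBA b a) c = t3 b a c)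
    (ρBA : BA →ₗ[k] BAC)
    (hρBA : ∀ (b : B) (a : A), ρBA (tmBA b a) = comb b (ψ e a))
    -- consequence of the flatness of B as a right T-module: the coinvariants
    -- of B ⊗_T A are B ⊗_T B
    (hcoinv : ∀ x : BA, ρBA x = ext x e →
      x ∈ Submodule.span k
        {y : BA | ∃ (b : B) (a : A), a ∈ B ∧ y = tmBA b a})
    -- σ is a left B-linear right C-colinear section of the multiplication map
    (σ : A →ₗ[k] BA)
    (hσB : ∀ (b : B) (a : A), σ ((b : A) * a) = b • σ a)
    (μBA : BA →ₗ[k] A)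
    (hμBA : ∀ (b : B) (a : A), μBA (tmBA b a) = (b : A) * a)
    (hσ_section : ∀ a : A, μBA (σ a) = a)
    (σC : AC →ₗ[k] BAC)
    (hσC : ∀ (a : A) (c : C), σC (tmAC a c) = ext (σ a) c)
    (hσ_colin : ∀ a : A, ρBA (σ a) = σC (ψ e a))
    -- f : A → B is a left T-linear retraction of the inclusion B ⊆ A
    (f : A → B)
    (hf_add : ∀ a a' : A, f (a + a') = f a + f a')
    (hf_T : ∀ (t : T) (a : A), f ((t : A) * a) = ⟨(t : A), hTB t.2⟩ * f a)
    (hf_retr : ∀ b : B, f (b : A) = b)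
    -- Φ = μ_B ∘ (B ⊗_T f) : B ⊗_T A → A (with image in B)
    (Φ : BA →ₗ[k] A)
    (hΦ : ∀ (b : B) (a : A), Φ (tmBA b a) = (b : A) * (f a : A)) :
    -- then φ = Φ ∘ σ is a left B-linear retraction of B ⊆ A with values in B:
    (∀ (b : B) (a : A), Φ (σ ((b : A) * a)) = (b : A) * Φ (σ a))
    ∧ (∀ a : A, Φ (σ a) ∈ B)
    ∧ (∀ b : B, Φ (σ (b : A)) = (b : A)) := by
  classical
  -- S : generators of BA
  set S : Set BA := {y : BA | ∃ (b : B) (a : A), y = tmBA b a} with hS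
  -- every element of BA is in the additive closure of S
  have hSsmul : ∀ (c : k) (y : BA), y ∈ S → c • y ∈ S := by
    rintro c y ⟨b, a, rfl⟩
    exact ⟨c • b, a, by rw [map_smul, LinearMap.smul_apply]⟩
  have hclos : ∀ x : BA, x ∈ AddSubmonoid.closure S := by
    have hM : Submodule.span k S ≤
        { carrier := AddSubmonoid.closure S
          add_mem' := fun ha hb => add_mem ha hb
          zero_mem' := by
            exact AddSubmonoid.subset_closure ⟨0, 0, by simp⟩
          smul_mem' := by
            intro c x hx
            induction hx using AddSubmonoid.closure_induction with
            | mem y hy => exact AddSubmonoid.subset_closure (hSsmul c y hy)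
            | zero => simpa using (AddSubmonoid.closure S).zero_mem
            | add a b _ _ ha hb => rw [smul_add]; exact add_mem ha hb } :=
      Submodule.span_le.2 (fun y hy => AddSubmonoid.subset_closure hy)
    intro x
    exact hM (hspanBA x)
  -- key: Φ is B-linear for the smul action
  have key : ∀ (x : BA) (b : B), Φ (b • x) = (b : A) * Φ x := by
    intro x b
    induction hclos x using AddSubmonoid.closure_induction with
    | mem y hy =>
        obtain ⟨b', a, rfl⟩ := hy
        rw [htmBA_left, hΦ, hΦ, Subalgebra.coe_mul, mul_assoc]
    | zero => simp
    | add u v _ _ hu hv => rw [smul_add, map_add, map_add, hu, hv, mul_add]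
  -- Φ maps into B
  have hΦB : ∀ x : BA, Φ x ∈ B := by
    intro x
    induction hspanBA x using Submodule.span_induction with
    | mem y hy =>
        obtain ⟨b, a, rfl⟩ := hy
        rw [hΦ]; exact mul_mem b.2 (f a).2
    | zero => simp
    | add u v _ _ hu hv => rw [map_add]; exact add_mem hu hv
    | smul c x _ hx => rw [map_smul]; exact B.smul_mem hx c
  -- σ 1 is coinvariant
  have hcoinv1 : ρBA (σ 1) = ext (σ 1) e := by
    rw [hσ_colin, hent2, hσC]
  have hmem1 := hcoinv (σ 1) hcoinv1
  -- on coinvariants, Φ agrees with μBA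
  have hΦμ : ∀ x : BA, x ∈ Submodule.span k
      {y : BA | ∃ (b : B) (a : A), a ∈ B ∧ y = tmBA b a} → Φ x = μBA x := by
    intro x hx
    induction hx using Submodule.span_induction with
    | mem y hy =>
        obtain ⟨b, a, ha, rfl⟩ := hy
        have : f a = ⟨a, ha⟩ := hf_retr ⟨a, ha⟩
        rw [hΦ, hμBA, this]
    | zero => simp
    | add u v _ _ hu hv => rw [map_add, map_add, hu, hv]
    | smul c x _ hx => rw [map_smul, map_smul, hx]
  have hΦσ1 : Φ (σ 1) = μBA (σ 1) := hΦμ _ hmem1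
  have hσ1 : μBA (σ 1) = 1 := hσ_section 1
  refine ⟨?_, fun a => hΦB (σ a), ?_⟩
  · intro b a
    rw [hσB, key]
  · intro b
    have : σ (b : A) = b • σ 1 := by
      rw [← hσB, mul_one]
    rw [this, key, hΦσ1, hσ1, mul_one]
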